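/- Let A and B be disjoint finite alphabets. If L ⊆ A* is a context-free language and L_r ⊆ B* is a regular language, then the shuffle L ⋈ L_r ⊆ (A ⊕ B)* is a context-free language. -/

import Mathlib

/-- The shuffle of a language `L₁ ⊆ A*` with a language `L₂ ⊆ B*`, as a language
over the disjoint union alphabet `A ⊕ B`. -/
def Language.shuffle {A B : Type} (L₁ : Language A) (L₂ : Language B) :
    Language (A ⊕ B) :=
  { w | ∃ (us : List (List A)) (vs : List (List B)),
      us.length = vs.length ∧ us.flatten ∈ L₁ ∧ vs.flatten ∈ L₂ ∧
      w = (List.zipWith (fun u v => u.map Sum.inl ++ v.map Sum.inr) us vs).flatten }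

namespace ShuffleCF

variable {A B N0 σ : Type}

/-- Projection to the `A` letters. -/
def prA (w : List (A ⊕ B)) : List A := w.filterMap fun x => x.getLeft?

/-- Projection to the `B` letters. -/
def prB (w : List (A ⊕ B)) : List B := w.filterMap fun x => x.getRight?

@[simp] lemma prA_nil : prA ([] : List (A ⊕ B)) = [] := rfl
@[simp] lemma prB_nil : prB ([] : List (A ⊕ B)) = [] := rfl
@[simp] lemma prA_append (x y : List (A ⊕ B)) : prA (x ++ y) = prA x ++ prA y :=
  List.filterMap_append
@[simp] lemma prB_append (x y : List (A ⊕ B)) : prB (x ++ y) = prB x ++ prB y :=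
  List.filterMap_append
@[simp] lemma prA_cons_inl (a : A) (w : List (A ⊕ B)) :
    prA (Sum.inl a :: w) = a :: prA w := by simp [prA]
@[simp] lemma prA_cons_inr (b : B) (w : List (A ⊕ B)) :
    prA (Sum.inr b :: w) = prA w := by rfl
@[simp] lemma prB_cons_inl (a : A) (w : List (A ⊕ B)) :
    prB (Sum.inl a :: w) = prB w := by rfl
@[simp] lemma prB_cons_inr (b : B) (w : List (A ⊕ B)) :
    prB (Sum.inr b :: w) = b :: prB w := by simp [prB]
@[simp] lemma prA_map_inr (v : List B) : prA (v.map (Sum.inr : B → A ⊕ B)) = [] := by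
  induction v with | nil => rfl | cons b v ih => simpa using ih
@[simp] lemma prB_map_inr (v : List B) : prB (v.map (Sum.inr : B → A ⊕ B)) = v := by
  induction v with | nil => rfl | cons b v ih => simpa using ih
@[simp] lemma prA_map_inl (u : List A) : prA (u.map (Sum.inl : A → A ⊕ B)) = u := by
  induction u with | nil => rfl | cons a u ih => simpa using ih
@[simp] lemma prB_map_inl (u : List A) : prB (u.map (Sum.inl : A → A ⊕ B)) = [] := by
  induction u with | nil => rfl | cons a u ih => simpa using ih

/-- Every word over `A ⊕ B` is a shuffle of its projections, and conversely. -/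
lemma decomp_pr (w : List (A ⊕ B)) :
    ∃ (us : List (List A)) (vs : List (List B)),
      us.length = vs.length ∧ us.flatten = prA w ∧ vs.flatten = prB w ∧
      w = (List.zipWith (fun u v => u.map Sum.inl ++ v.map Sum.inr) us vs).flatten := by
  induction w with
  | nil => exact ⟨[], [], rfl, rfl, rfl, rfl⟩
  | cons x w ih =>
    obtain ⟨us, vs, hlen, hA, hB, hw⟩ := ih
    cases x with
    | inl a =>
      refine ⟨[a] :: us, [] :: vs, by simp [hlen], by simp [hA], by simpa using hB, ?_⟩
      simp [hw]
    | inr b =>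
      refine ⟨[] :: us, [b] :: vs, by simp [hlen], by simpa using hA, by simp [hB], ?_⟩
      simp [hw]

lemma proj_flatten (us : List (List A)) (vs : List (List B)) (h : us.length = vs.length) :
    prA (List.zipWith (fun u v => u.map Sum.inl ++ v.map Sum.inr) us vs).flatten
        = us.flatten ∧
    prB (List.zipWith (fun u v => u.map Sum.inl ++ v.map Sum.inr) us vs).flatten
        = vs.flatten := by
  induction us generalizing vs with
  | nil => cases vs with
    | nil => simp
    | cons v vs => simp at h
  | cons u us ih =>
    cases vs with
    | nil => simp at h
    | cons v vs =>
      simp only [List.length_cons, Nat.add_right_cancel_iff] at h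
      obtain ⟨h1, h2⟩ := ih vs h
      constructor <;> simp [h1, h2]

lemma mem_shuffle_iff {L₁ : Language A} {L₂ : Language B} {w : List (A ⊕ B)} :
    w ∈ L₁.shuffle L₂ ↔ prA w ∈ L₁ ∧ prB w ∈ L₂ := by
  constructor
  · rintro ⟨us, vs, hlen, h1, h2, rfl⟩
    obtain ⟨e1, e2⟩ := proj_flatten us vs hlen
    exact ⟨e1 ▸ h1, e2 ▸ h2⟩
  · rintro ⟨hA, hB⟩
    obtain ⟨us, vs, hlen, h1, h2, hw⟩ := decomp_pr w
    exact ⟨us, vs, hlen, h1 ▸ hA, h2 ▸ hB, hw⟩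

/-- Nonterminals of the shuffle grammar. -/
abbrev NTs (A B N0 σ : Type) : Type := Option ((σ × Symbol A N0 × σ) ⊕ (σ × σ))

/-- Symbols of the shuffle grammar. -/
abbrev Syms (A B N0 σ : Type) : Type := Symbol (A ⊕ B) (NTs A B N0 σ)

/-- The nonterminal generating `B`-words leading `p` to `q`. -/
def ntW (p q : σ) : Syms A B N0 σ := Symbol.nonterminal (some (Sum.inr (p, q)))

/-- The nonterminal generating shuffles of words generated by the symbol `s`
with `B`-words leading `p` to `q`. -/
def ntS (p : σ) (s : Symbol A N0) (q : σ) : Syms A B N0 σ :=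
  Symbol.nonterminal (some (Sum.inl (p, s, q)))

/-- Lifting of a sentential form, choosing intermediate states. -/
inductive LFc : σ → List (Symbol A N0) → σ → List (Syms A B N0 σ) → Prop
  | nil (p : σ) : LFc p [] p []
  | cons (p r q' qe : σ) (s : Symbol A N0) (ss : List (Symbol A N0))
      (α : List (Syms A B N0 σ)) (h : LFc q' ss qe α) :
      LFc p (s :: ss) qe (ntW p r :: ntS r s q' :: α)

/-- Lifting with a final `W` block appended. -/
def LFf (p : σ) (sf : List (Symbol A N0)) (q : σ) (α : List (Syms A B N0 σ)) : Prop :=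
  ∃ m α₀, LFc p sf m α₀ ∧ α = α₀ ++ [ntW m q]

variable (g : ContextFreeGrammar.{0} A) (M : DFA B σ)

/-- Language of a symbol. -/
def symLang : Symbol A g.NT → Language A
  | .terminal a => {[a]}
  | .nonterminal X => {u | g.Derives [Symbol.nonterminal X] (u.map Symbol.terminal)}

/-- Rules of the shuffle grammar. -/
def RS : Set (ContextFreeRule (A ⊕ B) (NTs A B g.NT σ)) :=
  { r' |
    (∃ r ∈ g.rules, ∃ p q α, LFf p r.output q α ∧
        r' = ⟨some (Sum.inl (p, Symbol.nonterminal r.input, q)), α⟩) ∨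
    (∃ (a : A) (p q : σ),
        r' = ⟨some (Sum.inl (p, Symbol.terminal a, q)),
              [Symbol.terminal (Sum.inl a), ntW p q]⟩) ∨
    (∃ (b : B) (p q : σ),
        r' = ⟨some (Sum.inr (p, q)), [Symbol.terminal (Sum.inr b), ntW (M.step p b) q]⟩) ∨
    (∃ p : σ, r' = ⟨some (Sum.inr (p, p)), []⟩) ∨
    (∃ (f : σ) (α : List (Syms A B g.NT σ)), f ∈ M.accept ∧
        LFf M.start [Symbol.nonterminal g.initial] f α ∧ r' = ⟨none, α⟩) }

lemma LFc_nil_inv {p q : σ} {α : List (Syms A B N0 σ)} (h : LFc p [] q α) :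
    q = p ∧ α = [] := by cases h; exact ⟨rfl, rfl⟩

lemma LFc_cons_inv {p qe : σ} {s : Symbol A N0} {ss : List (Symbol A N0)}
    {α : List (Syms A B N0 σ)} (h : LFc p (s :: ss) qe α) :
    ∃ r q' α', LFc q' ss qe α' ∧ α = ntW p r :: ntS r s q' :: α' := by
  cases h with
  | cons p r q' qe s ss α h => exact ⟨r, q', α, h, rfl⟩

lemma finite_LFc [Finite σ] (sf : List (Symbol A N0)) :
    {x : σ × σ × List (Syms A B N0 σ) | LFc x.1 sf x.2.1 x.2.2}.Finite := by
  induction sf with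
  | nil =>
    apply Set.Finite.subset (Set.finite_range fun p : σ => (p, p, ([] : List (Syms A B N0 σ))))
    rintro ⟨p, q, α⟩ h
    change LFc p [] q α at h
    obtain ⟨rfl, rfl⟩ := LFc_nil_inv h
    exact ⟨_, rfl⟩
  | cons s ss ih =>
    apply Set.Finite.subset <| Set.Finite.image
      (f := fun x : (σ × σ) × σ × σ × List (Syms A B N0 σ) =>
        (x.1.1, x.2.2.1, ntW x.1.1 x.1.2 :: ntS x.1.2 s x.2.1 :: x.2.2.2))
      (Set.Finite.prod Set.finite_univ ih)
    rintro ⟨p, qe, α⟩ h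
    change LFc p (s :: ss) qe α at h
    obtain ⟨r, q', α', h', rfl⟩ := LFc_cons_inv h
    exact ⟨((p, r), (q', qe, α')), ⟨trivial, h'⟩, rfl⟩

lemma finite_LFf [Finite σ] (sf : List (Symbol A N0)) :
    {x : σ × σ × List (Syms A B N0 σ) | LFf x.1 sf x.2.1 x.2.2}.Finite := by
  apply Set.Finite.subset <| Set.Finite.image
    (f := fun x : (σ × σ × List (Syms A B N0 σ)) × σ =>
      (x.1.1, x.2, x.1.2.2 ++ [ntW x.1.2.1 x.2]))
    (Set.Finite.prod (finite_LFc sf) Set.finite_univ)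
  rintro ⟨p, q, α⟩ h'
  change LFf p sf q α at h'
  obtain ⟨m, α₀, h, rfl⟩ := h'
  exact ⟨((p, m, α₀), q), ⟨h, trivial⟩, rfl⟩


lemma finite_RS [Finite A] [Finite B] [Finite σ] : (RS g M).Finite := by
  have h1 : ∀ r : ContextFreeRule A g.NT,
      {r' : ContextFreeRule (A ⊕ B) (NTs A B g.NT σ) | ∃ p q α, LFf p r.output q α ∧
        r' = ⟨some (Sum.inl (p, Symbol.nonterminal r.input, q)), α⟩}.Finite := by
    intro r
    apply Set.Finite.subset <| Set.Finite.image
      (f := fun x : σ × σ × List (Syms A B g.NT σ) =>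
        (⟨some (Sum.inl (x.1, Symbol.nonterminal r.input, x.2.1)), x.2.2⟩ :
          ContextFreeRule (A ⊕ B) (NTs A B g.NT σ)))
      (finite_LFf r.output)
    rintro r' ⟨p, q, α, h, rfl⟩
    exact ⟨(p, q, α), h, rfl⟩
  apply Set.Finite.subset
    (s := (⋃ r ∈ (g.rules : Set (ContextFreeRule A g.NT)), {r' : ContextFreeRule (A ⊕ B) (NTs A B g.NT σ) |
          ∃ p q α, LFf p r.output q α ∧
            r' = ⟨some (Sum.inl (p, Symbol.nonterminal r.input, q)), α⟩}) ∪
      Set.range (fun x : A × σ × σ =>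
        (⟨some (Sum.inl (x.2.1, Symbol.terminal x.1, x.2.2)),
          [Symbol.terminal (Sum.inl x.1), ntW x.2.1 x.2.2]⟩ :
            ContextFreeRule (A ⊕ B) (NTs A B g.NT σ))) ∪
      Set.range (fun x : B × σ × σ =>
        (⟨some (Sum.inr (x.2.1, x.2.2)),
          [Symbol.terminal (Sum.inr x.1), ntW (M.step x.2.1 x.1) x.2.2]⟩ :
            ContextFreeRule (A ⊕ B) (NTs A B g.NT σ))) ∪
      Set.range (fun p : σ =>
        (⟨some (Sum.inr (p, p)), []⟩ : ContextFreeRule (A ⊕ B) (NTs A B g.NT σ))) ∪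
      Set.image (fun x : σ × σ × List (Syms A B g.NT σ) =>
          (⟨none, x.2.2⟩ : ContextFreeRule (A ⊕ B) (NTs A B g.NT σ)))
        {x | LFf x.1 [Symbol.nonterminal g.initial] x.2.1 x.2.2})
  · exact ((((Set.Finite.biUnion g.rules.finite_toSet fun r _ => h1 r).union
      (Set.finite_range _)).union (Set.finite_range _)).union (Set.finite_range _)).union
      ((finite_LFf _).image _)
  · rintro r' (⟨r, hr, p, q, α, h, rfl⟩ | ⟨a, p, q, rfl⟩ | ⟨b, p, q, rfl⟩ | ⟨p, rfl⟩ |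
      ⟨f, α, hf, h, rfl⟩)
    · exact Or.inl <| Or.inl <| Or.inl <| Or.inl <|
        Set.mem_biUnion hr ⟨p, q, α, h, rfl⟩
    · exact Or.inl <| Or.inl <| Or.inl <| Or.inr ⟨(a, p, q), rfl⟩
    · exact Or.inl <| Or.inl <| Or.inr ⟨(b, p, q), rfl⟩
    · exact Or.inl <| Or.inr ⟨p, rfl⟩
    · exact Or.inr ⟨(M.start, f, α), h, rfl⟩

/-- The shuffle grammar. -/
noncomputable def G [Finite A] [Finite B] [Finite σ] : ContextFreeGrammar.{0} (A ⊕ B) :=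
  ⟨NTs A B g.NT σ, none, (finite_RS g M).toFinset⟩


/-- Per-symbol semantic invariant. -/
def goodS : Syms A B g.NT σ → List (A ⊕ B) → Prop
  | .terminal t, w => w = [t]
  | .nonterminal none, w => prA w ∈ g.language ∧ M.evalFrom M.start (prB w) ∈ M.accept
  | .nonterminal (some (.inl (p, s, q))), w =>
      prA w ∈ symLang g s ∧ M.evalFrom p (prB w) = q
  | .nonterminal (some (.inr (p, q))), w => prA w = [] ∧ M.evalFrom p (prB w) = q

/-- Semantic invariant for sentential forms. -/
inductive GoodsL : List (Syms A B g.NT σ) → List (A ⊕ B) → Prop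
  | nil : GoodsL [] []
  | cons {s ss w ws} : goodS g M s w → GoodsL ss ws → GoodsL (s :: ss) (w ++ ws)

lemma GoodsL_append_iff {x y : List (Syms A B g.NT σ)} {w : List (A ⊕ B)} :
    GoodsL g M (x ++ y) w ↔
      ∃ w₁ w₂, w = w₁ ++ w₂ ∧ GoodsL g M x w₁ ∧ GoodsL g M y w₂ := by
  constructor
  · intro h
    induction x generalizing w with
    | nil => exact ⟨[], w, rfl, GoodsL.nil, h⟩
    | cons s x ih =>
      rcases h with _ | ⟨hs, hrest⟩
      rename_i w₀ ws
      obtain ⟨w₁, w₂, rfl, hx, hy⟩ := ih hrest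
      exact ⟨w₀ ++ w₁, w₂, by rw [List.append_assoc], GoodsL.cons hs hx, hy⟩
  · rintro ⟨w₁, w₂, rfl, hx, hy⟩
    induction hx with
    | nil => exact hy
    | cons hs _ ih => rw [List.append_assoc]; exact GoodsL.cons hs ih

lemma GoodsL_singleton_iff {s : Syms A B g.NT σ} {w : List (A ⊕ B)} :
    GoodsL g M [s] w ↔ goodS g M s w := by
  constructor
  · intro h
    rcases h with _ | ⟨hs, hrest⟩
    rcases hrest
    simpa using hs
  · intro h
    simpa using GoodsL.cons h GoodsL.nil

lemma goodsL_self (w : List (A ⊕ B)) : GoodsL g M (w.map Symbol.terminal) w := by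
  induction w with
  | nil => exact GoodsL.nil
  | cons t w ih =>
    have : goodS g M (Symbol.terminal t) [t] := rfl
    simpa using GoodsL.cons this ih

lemma lfc_sound {p m : σ} {sf : List (Symbol A g.NT)} {α₀ : List (Syms A B g.NT σ)}
    (h : LFc p sf m α₀) :
    ∀ w, GoodsL g M α₀ w →
      g.Derives sf ((prA w).map Symbol.terminal) ∧ M.evalFrom p (prB w) = m := by
  induction h with
  | nil p =>
    intro w hg
    rcases hg
    exact ⟨ContextFreeGrammar.Derives.refl [], rfl⟩
  | cons p r q' qe s ss α h ih =>
    intro w hg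
    rcases hg with _ | ⟨h₀, hg⟩
    rename_i w₀ wr
    rcases hg with _ | ⟨h₁, hg⟩
    rename_i w₁ ws
    simp only [goodS, ntW] at h₀
    simp only [goodS, ntS] at h₁
    obtain ⟨hder, heval⟩ := ih ws hg
    constructor
    · have hA : prA (w₀ ++ (w₁ ++ ws)) = prA w₁ ++ prA ws := by
        simp [h₀.1]
      rw [hA, List.map_append]
      cases s with
      | terminal a =>
        have : prA w₁ = [a] := h₁.1
        rw [this]
        simpa using hder.append_left [Symbol.terminal (N := g.NT) a]
      | nonterminal X =>
        exact ContextFreeGrammar.Derives.trans (h₁.1.append_right ss) (hder.append_left _)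
    · rw [prB_append, prB_append, DFA.evalFrom_of_append,
        DFA.evalFrom_of_append, h₀.2, h₁.2, heval]

lemma lff_sound {p q : σ} {sf : List (Symbol A g.NT)} {α : List (Syms A B g.NT σ)}
    {w : List (A ⊕ B)} (h : LFf p sf q α) (hg : GoodsL g M α w) :
    g.Derives sf ((prA w).map Symbol.terminal) ∧ M.evalFrom p (prB w) = q := by
  obtain ⟨m, α₀, hc, rfl⟩ := h
  rw [GoodsL_append_iff] at hg
  obtain ⟨w₁, w₂, rfl, h1, h2⟩ := hg
  obtain ⟨hder, heval⟩ := lfc_sound g M hc w₁ h1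
  rw [GoodsL_singleton_iff] at h2
  simp only [goodS, ntW] at h2
  constructor
  · rwa [prA_append, h2.1, List.append_nil]
  · rw [prB_append, DFA.evalFrom_of_append, heval, h2.2]

lemma rule_sound {r' : ContextFreeRule (A ⊕ B) (NTs A B g.NT σ)} (h : r' ∈ RS g M)
    {w : List (A ⊕ B)} (hg : GoodsL g M r'.output w) :
    goodS g M (Symbol.nonterminal r'.input) w := by
  rcases h with ⟨r, hr, p, q, α, hl, rfl⟩ | ⟨a, p, q, rfl⟩ | ⟨b, p, q, rfl⟩ | ⟨p, rfl⟩ |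
    ⟨f, α, hf, hl, rfl⟩
  · obtain ⟨hder, heval⟩ := lff_sound g M hl hg
    refine ⟨?_, heval⟩
    exact ContextFreeGrammar.Produces.trans_derives
      ⟨r, hr, ContextFreeRule.Rewrites.input_output⟩ hder
  · rcases hg with _ | ⟨h₀, hg⟩
    rename_i w₀ ws
    rcases hg with _ | ⟨h₁, hg⟩
    rename_i w₁ ws'
    rcases hg
    simp only [goodS] at h₀
    simp only [goodS, ntW] at h₁
    subst h₀
    refine ⟨?_, ?_⟩
    · show prA _ ∈ symLang g (Symbol.terminal a)
      simp only [symLang]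
      simp [h₁.1]
      rfl
    · simp [h₁.2]
  · rcases hg with _ | ⟨h₀, hg⟩
    rename_i w₀ ws
    rcases hg with _ | ⟨h₁, hg⟩
    rename_i w₁ ws'
    rcases hg
    simp only [goodS] at h₀
    simp only [goodS, ntW] at h₁
    subst h₀
    refine ⟨by simp [h₁.1], ?_⟩
    show M.evalFrom p (prB (Sum.inr b :: (w₁ ++ []))) = q
    simp only [prB_cons_inr, List.append_nil]
    exact h₁.2
  · rcases hg
    exact ⟨rfl, rfl⟩
  · obtain ⟨hder, heval⟩ := lff_sound g M hl hg
    refine ⟨?_, ?_⟩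
    · rw [ContextFreeGrammar.mem_language_iff]
      exact hder
    · rw [heval]; exact hf

lemma derives_goods [Finite A] [Finite B] [Finite σ] {α : List (Syms A B g.NT σ)}
    {w : List (A ⊕ B)} (h : (G g M).Derives α (w.map Symbol.terminal)) :
    GoodsL g M α w := by
  induction h using Relation.ReflTransGen.head_induction_on with
  | refl => exact goodsL_self g M w
  | head hstep _ ih =>
    obtain ⟨r', hr', hrw⟩ := hstep
    obtain ⟨x, y, rfl, rfl⟩ := hrw.exists_parts
    replace hr' : r' ∈ RS g M := (Set.Finite.mem_toFinset (finite_RS g M)).1 hr'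
    obtain ⟨w₁, w₂, rfl, h1, h2⟩ := (GoodsL_append_iff g M).1 ih
    obtain ⟨w₀, wmid, rfl, h0, hmid⟩ := (GoodsL_append_iff g M).1 h1
    have : goodS g M (Symbol.nonterminal r'.input) wmid := rule_sound g M hr' hmid
    refine (GoodsL_append_iff g M).2 ⟨w₀ ++ wmid, w₂, rfl, ?_, h2⟩
    exact (GoodsL_append_iff g M).2 ⟨w₀, wmid, rfl, h0, (GoodsL_singleton_iff g M).2 this⟩


@[simp] lemma evalFrom_cons (p : σ) (b : B) (v : List B) :
    M.evalFrom p (b :: v) = M.evalFrom (M.step p b) v := rfl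

lemma lfc_append {p m e : σ} {x y : List (Symbol A g.NT)} {α₁ α₂ : List (Syms A B g.NT σ)}
    (h₁ : LFc p x m α₁) (h₂ : LFc m y e α₂) : LFc p (x ++ y) e (α₁ ++ α₂) := by
  induction h₁ with
  | nil p => exact h₂
  | cons p r q' qe s ss α h ih => exact LFc.cons p r q' e s (ss ++ y) _ (ih h₂)

lemma lfc_split {p e : σ} {x y : List (Symbol A g.NT)} {α : List (Syms A B g.NT σ)}
    (h : LFc p (x ++ y) e α) :
    ∃ m α₁ α₂, α = α₁ ++ α₂ ∧ LFc p x m α₁ ∧ LFc m y e α₂ := by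
  induction x generalizing p α with
  | nil => exact ⟨p, [], α, rfl, LFc.nil p, h⟩
  | cons s x ih =>
    obtain ⟨r, q', α', h', rfl⟩ := LFc_cons_inv h
    obtain ⟨m, α₁, α₂, rfl, hx, hy⟩ := ih h'
    exact ⟨m, ntW p r :: ntS r s q' :: α₁, α₂, rfl, LFc.cons p r q' m s x α₁ hx, hy⟩

lemma lff_head {p q : σ} {sf : List (Symbol A g.NT)} {α : List (Syms A B g.NT σ)}
    (h : LFf p sf q α) :
    ∃ x rest, α = ntW p x :: rest ∧ ∀ p', LFf p' sf q (ntW p' x :: rest) := by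
  obtain ⟨m, α₀, hc, rfl⟩ := h
  cases hc with
  | nil _ => exact ⟨q, [], rfl, fun p' => ⟨p', [], LFc.nil p', rfl⟩⟩
  | cons _ r q' qe s ss α' h' =>
    refine ⟨r, ntS r s q' :: (α' ++ [ntW m q]), by simp, fun p' =>
      ⟨m, ntW p' r :: ntS r s q' :: α', LFc.cons p' r q' m s ss α' h', by simp⟩⟩

variable [Finite A] [Finite B] [Finite σ]

lemma mem_rules {r' : ContextFreeRule (A ⊕ B) (NTs A B g.NT σ)} (h : r' ∈ RS g M) :
    r' ∈ (G g M).rules := (Set.Finite.mem_toFinset (finite_RS g M)).2 h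

lemma W_eps (p : σ) : (G g M).Produces [ntW p p] ([] : List (Syms A B g.NT σ)) :=
  ⟨⟨some (Sum.inr (p, p)), []⟩,
    mem_rules g M (Or.inr (Or.inr (Or.inr (Or.inl ⟨p, rfl⟩)))),
    ContextFreeRule.Rewrites.input_output⟩

lemma W_step (p q : σ) (b : B) :
    (G g M).Produces [ntW p q] [Symbol.terminal (Sum.inr b), ntW (M.step p b) q] :=
  ⟨⟨some (Sum.inr (p, q)), [Symbol.terminal (Sum.inr b), ntW (M.step p b) q]⟩,
    mem_rules g M (Or.inr (Or.inr (Or.inl ⟨b, p, q, rfl⟩))),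
    ContextFreeRule.Rewrites.input_output⟩

lemma T_step (p q : σ) (a : A) :
    (G g M).Produces [ntS p (Symbol.terminal a) q] [Symbol.terminal (Sum.inl a), ntW p q] :=
  ⟨⟨some (Sum.inl (p, Symbol.terminal a, q)), [Symbol.terminal (Sum.inl a), ntW p q]⟩,
    mem_rules g M (Or.inr (Or.inl ⟨a, p, q, rfl⟩)),
    ContextFreeRule.Rewrites.input_output⟩

lemma N_step {r : ContextFreeRule A g.NT} (hr : r ∈ g.rules) {p q : σ}
    {α : List (Syms A B g.NT σ)} (h : LFf p r.output q α) :
    (G g M).Produces [ntS p (Symbol.nonterminal r.input) q] α :=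
  ⟨⟨some (Sum.inl (p, Symbol.nonterminal r.input, q)), α⟩,
    mem_rules g M (Or.inl ⟨r, hr, p, q, α, h, rfl⟩),
    ContextFreeRule.Rewrites.input_output⟩

lemma Z_step {f : σ} (hf : f ∈ M.accept) {α : List (Syms A B g.NT σ)}
    (h : LFf M.start [Symbol.nonterminal g.initial] f α) :
    (G g M).Produces [Symbol.nonterminal none] α :=
  ⟨⟨none, α⟩,
    mem_rules g M (Or.inr (Or.inr (Or.inr (Or.inr ⟨f, α, hf, h, rfl⟩)))),
    ContextFreeRule.Rewrites.input_output⟩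

lemma base_lift :
    ∀ (w : List (A ⊕ B)) (p : σ),
      ∃ α, LFf p ((prA w).map Symbol.terminal) (M.evalFrom p (prB w)) α ∧
        (G g M).Derives α (w.map Symbol.terminal) := by
  intro w
  induction w with
  | nil =>
    intro p
    exact ⟨[ntW p p], ⟨p, [], LFc.nil p, rfl⟩, (W_eps g M p).single⟩
  | cons c w ih =>
    cases c with
    | inl a =>
      intro p
      obtain ⟨α', hL, hD⟩ := ih p
      obtain ⟨m, α₀, hc, rfl⟩ := hL
      simp only [prA_cons_inl, prB_cons_inl, List.map_cons]
      refine ⟨ntW p p :: ntS p (Symbol.terminal a) p ::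
        (α₀ ++ [ntW m (M.evalFrom p (prB w))]), ?_, ?_⟩
      · exact ⟨m, ntW p p :: ntS p (Symbol.terminal a) p :: α₀,
          LFc.cons p p p m _ _ _ hc, rfl⟩
      · have d1 : (G g M).Derives
            ([ntW p p] ++ (ntS p (Symbol.terminal a) p ::
              (α₀ ++ [ntW m (M.evalFrom p (prB w))])))
            ([] ++ (ntS p (Symbol.terminal a) p ::
              (α₀ ++ [ntW m (M.evalFrom p (prB w))]))) :=
          (W_eps g M p).single.append_right _
        have d2 : (G g M).Derives
            ([ntS p (Symbol.terminal a) p] ++ (α₀ ++ [ntW m (M.evalFrom p (prB w))]))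
            ([Symbol.terminal (Sum.inl a), ntW p p] ++
              (α₀ ++ [ntW m (M.evalFrom p (prB w))])) :=
          (T_step g M p p a).single.append_right _
        have d3 : (G g M).Derives
            ([Symbol.terminal (Sum.inl a)] ++
              ([ntW p p] ++ (α₀ ++ [ntW m (M.evalFrom p (prB w))])))
            ([Symbol.terminal (Sum.inl a)] ++
              ([] ++ (α₀ ++ [ntW m (M.evalFrom p (prB w))]))) :=
          ((W_eps g M p).single.append_right _).append_left _
        have d4 : (G g M).Derives
            ([Symbol.terminal (Sum.inl a)] ++ (α₀ ++ [ntW m (M.evalFrom p (prB w))]))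
            ([Symbol.terminal (Sum.inl a)] ++ w.map Symbol.terminal) :=
          hD.append_left _
        simp only [List.nil_append, List.singleton_append, List.cons_append] at d1 d2 d3 d4 ⊢
        exact d1.trans (d2.trans (d3.trans d4))
    | inr b =>
      intro p
      obtain ⟨α', hL, hD⟩ := ih (M.step p b)
      obtain ⟨x, rest, rfl, hall⟩ := lff_head g hL
      simp only [prA_cons_inr, prB_cons_inr, List.map_cons, evalFrom_cons]
      refine ⟨ntW p x :: rest, hall p, ?_⟩
      have d1 : (G g M).Derives ([ntW p x] ++ rest)
          ([Symbol.terminal (Sum.inr b), ntW (M.step p b) x] ++ rest) :=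
        (W_step g M p x b).single.append_right _
      have d2 : (G g M).Derives
          ([Symbol.terminal (Sum.inr b)] ++ (ntW (M.step p b) x :: rest))
          ([Symbol.terminal (Sum.inr b)] ++ w.map Symbol.terminal) :=
        hD.append_left _
      simp only [List.nil_append, List.singleton_append, List.cons_append] at d1 d2 ⊢
      exact d1.trans d2

lemma main_lift {sf : List (Symbol A g.NT)} {u : List A}
    (hd : g.Derives sf (u.map Symbol.terminal)) :
    ∀ (w : List (A ⊕ B)) (p : σ), prA w = u →
      ∃ α, LFf p sf (M.evalFrom p (prB w)) α ∧
        (G g M).Derives α (w.map Symbol.terminal) := by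
  induction hd using Relation.ReflTransGen.head_induction_on with
  | refl =>
    intro w p hw
    rw [← hw]
    exact base_lift g M w p
  | head hstep _ ih =>
    intro w p hw
    obtain ⟨α₂, hL2, hD2⟩ := ih w p hw
    obtain ⟨r, hr, hrw⟩ := hstep
    obtain ⟨l, rr, rfl, rfl⟩ := hrw.exists_parts
    obtain ⟨m, α₀, hc, rfl⟩ := hL2
    obtain ⟨m₂, α₁₂, αr, rfl, hc12, hcr⟩ := lfc_split g hc
    obtain ⟨m₁, αl, αmid, rfl, hcl, hcmid⟩ := lfc_split g hc12
    refine ⟨((αl ++ [ntW m₁ m₁, ntS m₁ (Symbol.nonterminal r.input) m₂]) ++ αr) ++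
      [ntW m (M.evalFrom p (prB w))], ⟨m, _, ?_, rfl⟩, ?_⟩
    · exact lfc_append g (lfc_append g hcl
        (LFc.cons m₁ m₁ m₂ m₂ (Symbol.nonterminal r.input) [] [] (LFc.nil m₂))) hcr
    · set E := M.evalFrom p (prB w) with hE
      have e1 : (G g M).Derives
          (αl ++ ([ntW m₁ m₁] ++
            ([ntS m₁ (Symbol.nonterminal r.input) m₂] ++ (αr ++ [ntW m E]))))
          (αl ++ ([] ++
            ([ntS m₁ (Symbol.nonterminal r.input) m₂] ++ (αr ++ [ntW m E])))) :=
        ((W_eps g M m₁).single.append_right _).append_left _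
      have e2 : (G g M).Derives
          (αl ++ ([ntS m₁ (Symbol.nonterminal r.input) m₂] ++ (αr ++ [ntW m E])))
          (αl ++ ((αmid ++ [ntW m₂ m₂]) ++ (αr ++ [ntW m E]))) :=
        ((N_step g M hr ⟨m₂, αmid, hcmid, rfl⟩).single.append_right _).append_left _
      have e3 : (G g M).Derives
          (αl ++ (αmid ++ ([ntW m₂ m₂] ++ (αr ++ [ntW m E]))))
          (αl ++ (αmid ++ ([] ++ (αr ++ [ntW m E])))) :=
        (((W_eps g M m₂).single.append_right _).append_left αmid).append_left αl
      simp only [List.nil_append, List.singleton_append, List.cons_append,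
        List.append_assoc] at e1 e2 e3 hD2 ⊢
      exact e1.trans (e2.trans (e3.trans hD2))

lemma G_lang : (G g M).language = g.language.shuffle M.accepts := by
  ext w
  rw [mem_shuffle_iff]
  constructor
  · intro hw
    rw [ContextFreeGrammar.mem_language_iff] at hw
    have hg := derives_goods g M hw
    replace hg := (GoodsL_singleton_iff g M).1 hg
    have hg' : prA w ∈ g.language ∧ M.evalFrom M.start (prB w) ∈ M.accept := hg
    exact ⟨hg'.1, (DFA.mem_accepts M).2 hg'.2⟩
  · rintro ⟨hA, hB⟩
    rw [ContextFreeGrammar.mem_language_iff] at hA ⊢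
    obtain ⟨α, hL, hD⟩ := main_lift g M hA w M.start rfl
    have hf : M.evalFrom M.start (prB w) ∈ M.accept := (DFA.mem_accepts M).1 hB
    exact ((Z_step g M hf hL).trans_derives hD)

end ShuffleCF

theorem stmt_13 {A B : Type} [Finite A] [Finite B]
    {L : Language A} {Lr : Language B}
    (h : L.IsContextFree) (hr : Lr.IsRegular) :
    (L.shuffle Lr).IsContextFree := by
  obtain ⟨g, rfl⟩ := h
  obtain ⟨σ, iσ, M, rfl⟩ := hr
  haveI := iσ
  exact ⟨ShuffleCF.G g M, ShuffleCF.G_lang g M⟩
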